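/- For integers n ≥ 2, d ≥ 4, 0 ≤ k ≤ ⌈(1/(n+1))·C(n+d,n)⌉, and integers u, ε with 0 ≤ ε < n satisfying n·u + ε = k·(n+1) − C(n+d−1, n), one has C(n+d−2, n) ≤ (k − u − ε)·(n+1). -/
import Mathlib

lemma AH_choose_mono_diag (n : ℕ) : ∀ {r d : ℕ}, r ≤ d → (n + r).choose r ≤ (n + d).choose d := by
  intro r d h
  induction d, h using Nat.le_induction with
  | base => exact le_rfl
  | succ d hd ih =>
    calc (n + r).choose r ≤ (n + d).choose d := ih
      _ ≤ (n + (d+1)).choose (d + 1) := by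
          show _ ≤ (n + d + 1).choose (d + 1)
          rw [Nat.choose_succ_succ]
          exact Nat.le_add_right _ _

lemma AH_24choose4 (m : ℕ) : 24 * (m + 4).choose 4 = (m+4)*(m+3)*(m+2)*(m+1) := by
  have e4 : (m+4).choose 4 * 4 = (m+4).choose 3 * (m+1) := by
    have := Nat.choose_succ_right_eq (m+4) 3
    rwa [show m+4-3 = m+1 from by omega] at this
  have e3 : (m+4).choose 3 * 3 = (m+4).choose 2 * (m+2) := by
    have := Nat.choose_succ_right_eq (m+4) 2
    rwa [show m+4-2 = m+2 from by omega] at this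
  have e2 : (m+4).choose 2 * 2 = (m+4).choose 1 * (m+3) := by
    have := Nat.choose_succ_right_eq (m+4) 1
    rwa [show m+4-1 = m+3 from by omega] at this
  calc 24 * (m+4).choose 4 = ((m+4).choose 4 * 4) * 6 := by ring
    _ = ((m+4).choose 3 * (m+1)) * 6 := by rw [e4]
    _ = ((m+4).choose 3 * 3) * ((m+1) * 2) := by ring
    _ = ((m+4).choose 2 * (m+2)) * ((m+1) * 2) := by rw [e3]
    _ = ((m+4).choose 2 * 2) * ((m+2) * (m+1)) := by ring
    _ = ((m+4).choose 1 * (m+3)) * ((m+2) * (m+1)) := by rw [e2]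
    _ = (m+4)*(m+3)*(m+2)*(m+1) := by rw [Nat.choose_one_right]; ring

lemma AH_keyM (m e : ℕ)
    (hexc : ¬((m = 0 ∧ e ≤ 1) ∨ (m = 1 ∧ e = 0) ∨ (m = 2 ∧ e = 0))) :
    ((m+2:ℤ)^3 - (m+2:ℤ)^2 + 1 : ℤ) ≤ ((e:ℤ)+3) * ((m + e + 4).choose (e + 4) : ℤ) := by
  match m, hexc with
  | 0, _ =>
    have he : 2 ≤ e := by omega
    rw [show 0 + e + 4 = e + 4 by ring, Nat.choose_self]
    have : (2:ℤ) ≤ (e:ℤ) := by exact_mod_cast he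
    push_cast
    nlinarith [this]
  | 1, _ =>
    have he : 1 ≤ e := by omega
    rw [show 1 + e + 4 = (e + 4) + 1 by ring, Nat.choose_succ_self_right]
    have : (1:ℤ) ≤ (e:ℤ) := by exact_mod_cast he
    push_cast
    nlinarith [this]
  | 2, _ =>
    have he : 1 ≤ e := by omega
    have hmono : (2 + 5).choose 5 ≤ (2 + (e + 4)).choose (e + 4) :=
      AH_choose_mono_diag 2 (by omega)
    norm_num at hmono
    rw [show 2 + e + 4 = 2 + (e + 4) by ring]
    have hC : (21:ℤ) ≤ ((2 + (e+4)).choose (e+4) : ℤ) := by exact_mod_cast hmono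
    have he' : (1:ℤ) ≤ (e:ℤ) := by exact_mod_cast he
    have hmul : (4:ℤ) * 21 ≤ ((e:ℤ)+3) * ((2 + (e+4)).choose (e+4) : ℤ) :=
      mul_le_mul (by linarith) hC (by norm_num) (by linarith)
    push_cast
    linarith
  | (m+3), _ =>
    have hmono : (m + 3 + 4).choose 4 ≤ (m + 3 + (e + 4)).choose (e + 4) :=
      AH_choose_mono_diag (m+3) (by omega)
    have h24' : (24:ℤ) * ((m + 3 + 4).choose 4 : ℤ) = ((m:ℤ)+7)*((m:ℤ)+6)*((m:ℤ)+5)*((m:ℤ)+4) := by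
      exact_mod_cast AH_24choose4 (m+3)
    have hmono' : ((m + 3 + 4).choose 4 : ℤ) ≤ ((m + 3 + (e + 4)).choose (e + 4) : ℤ) := by
      exact_mod_cast hmono
    rw [show m + 3 + e + 4 = m + 3 + (e + 4) by ring]
    have hm : (0:ℤ) ≤ (m:ℤ) := by positivity
    have hee : (0:ℤ) ≤ (e:ℤ) := by positivity
    have hC0 : (0:ℤ) ≤ ((m + 3 + 4).choose 4 : ℤ) := by positivity
    have hmul : (3:ℤ) * ((m + 3 + 4).choose 4 : ℤ)
        ≤ ((e:ℤ)+3) * ((m + 3 + (e + 4)).choose (e + 4) : ℤ) :=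
      mul_le_mul (by linarith) hmono' hC0 (by linarith)
    push_cast
    nlinarith [hmul, h24', hm, mul_nonneg hm hm, mul_nonneg (mul_nonneg hm hm) hm,
      mul_nonneg (mul_nonneg (mul_nonneg hm hm) hm) hm]


theorem stmt_1 (n d : ℕ) (k u ε : ℤ) (hn : 2 ≤ n) (hd : 4 ≤ d)
    (hk0 : 0 ≤ k) (hk : k ≤ ⌈(((n + d).choose n : ℚ)) / ((n : ℚ) + 1)⌉)
    (hε0 : 0 ≤ ε) (hεn : ε < (n : ℤ))
    (h : (n : ℤ) * u + ε = k * ((n : ℤ) + 1) - ((n + d - 1).choose n : ℤ)) :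
    ((n + d - 2).choose n : ℤ) ≤ (k - u - ε) * ((n : ℤ) + 1) := by
  obtain ⟨m, rfl⟩ : ∃ m, n = m + 2 := ⟨n - 2, by omega⟩
  obtain ⟨e, rfl⟩ : ∃ e, d = e + 4 := ⟨d - 4, by omega⟩
  rw [show m + 2 + (e + 4) - 1 = m + e + 5 from by omega] at h
  rw [show m + 2 + (e + 4) - 2 = m + e + 4 from by omega]
  rw [show m + 2 + (e + 4) = m + e + 6 from by omega] at hk
  -- ceiling bound : k * (m+3) ≤ N + (m+2)
  have hK : k * ((m:ℤ) + 3) ≤ ((m + e + 6).choose (m + 2) : ℤ) + ((m:ℤ) + 2) := by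
    have hceil : (⌈(((m + e + 6).choose (m + 2) : ℚ)) / (((m+2:ℕ) : ℚ) + 1)⌉ : ℚ)
        < (((m + e + 6).choose (m + 2) : ℚ)) / (((m+2:ℕ) : ℚ) + 1) + 1 := Int.ceil_lt_add_one _
    have hkq : (k : ℚ) ≤ (⌈(((m + e + 6).choose (m + 2) : ℚ)) / (((m+2:ℕ) : ℚ) + 1)⌉ : ℚ) := by
      exact_mod_cast hk
    have hpos : (0:ℚ) < ((m+2:ℕ) : ℚ) + 1 := by positivity
    have hq : (k : ℚ) * (((m+2:ℕ) : ℚ) + 1)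
        < ((m + e + 6).choose (m + 2) : ℚ) + (((m+2:ℕ) : ℚ) + 1) := by
      have h1 : (k : ℚ) < (((m + e + 6).choose (m + 2) : ℚ)) / (((m+2:ℕ) : ℚ) + 1) + 1 :=
        lt_of_le_of_lt hkq hceil
      have h2 := (mul_lt_mul_of_pos_right h1 hpos)
      rwa [add_mul, div_mul_cancel₀ _ (ne_of_gt hpos), one_mul] at h2
    have hz : k * ((m:ℤ) + 3) < ((m + e + 6).choose (m + 2) : ℤ) + ((m:ℤ) + 3) := by
      exact_mod_cast (by push_cast at hq ⊢; linarith : (k:ℚ) * ((m:ℚ)+3)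
        < ((m + e + 6).choose (m + 2) : ℚ) + ((m:ℚ)+3))
    omega
  push_cast at h hεn hK ⊢
  by_cases hexc : (m = 0 ∧ e ≤ 1) ∨ (m = 1 ∧ e = 0) ∨ (m = 2 ∧ e = 0)
  · -- finitely many exceptional cases: reduce to concrete numbers and use omega
    rcases hexc with ⟨rfl, he⟩ | ⟨rfl, rfl⟩ | ⟨rfl, rfl⟩
    · interval_cases e <;> norm_num [Nat.choose] at h hK ⊢ <;> omega
    · norm_num [Nat.choose] at h hK ⊢; omega
    · norm_num [Nat.choose] at h hK ⊢; omega
  · -- general case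
    have hM := AH_keyM m e hexc
    -- rename the binomials
    set Nb : ℤ := ((m + e + 6).choose (m + 2) : ℤ) with hNb
    set A : ℤ := ((m + e + 5).choose (m + 2) : ℤ) with hA
    set B : ℤ := ((m + e + 4).choose (m + 2) : ℤ) with hB
    set b : ℤ := ((m + e + 4).choose (m + 1) : ℤ) with hb
    set c : ℤ := ((m + e + 4).choose m : ℤ) with hc
    set a : ℤ := ((m + e + 5).choose (m + 1) : ℤ) with ha
    have P1 : Nb = A + a := by
      rw [hNb, hA, ha]
      exact_mod_cast congrArg (Nat.cast : ℕ → ℤ)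
        (by rw [show m + e + 6 = (m + e + 5) + 1 from rfl, show m + 2 = (m + 1) + 1 from rfl,
              Nat.choose_succ_succ]; ring)
    have P2 : A = b + B := by
      rw [hA, hB, hb]
      exact_mod_cast congrArg (Nat.cast : ℕ → ℤ)
        (by rw [show m + e + 5 = (m + e + 4) + 1 from rfl, show m + 2 = (m + 1) + 1 from rfl,
              Nat.choose_succ_succ])
    have P3 : a = c + b := by
      rw [ha, hb, hc]
      exact_mod_cast congrArg (Nat.cast : ℕ → ℤ)
        (by rw [show m + e + 5 = (m + e + 4) + 1 from rfl, show m + 1 = m + 1 from rfl,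
              Nat.choose_succ_succ])
    have P4 : b * ((m:ℤ) + 1) = c * ((e:ℤ) + 4) := by
      have := Nat.choose_succ_right_eq (m + e + 4) m
      rw [show m + e + 4 - m = e + 4 from by omega] at this
      rw [hb, hc]
      exact_mod_cast this
    have hMc : ((m+2:ℤ)^3 - (m+2:ℤ)^2 + 1 : ℤ) ≤ ((e:ℤ)+3) * c := by
      have hsymm : (m + e + 4).choose (e + 4) = (m + e + 4).choose m := by
        have h0 := Nat.choose_symm (show e + 4 ≤ m + e + 4 by omega)
        rw [show m + e + 4 - (e + 4) = m from by omega] at h0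
        exact h0.symm
      rwa [hsymm] at hM
    -- main inequality
    have w2 : (0:ℤ) ≤ ((m:ℤ)+3) * ((m:ℤ)+1) * (((m:ℤ)+1) - ε) :=
      mul_nonneg (by positivity) (by linarith)
    have hEq : ((m:ℤ)+2) * ((k - u - ε) * ((m:ℤ)+2+1)) - ((m:ℤ)+2) * B
        = (Nb + ((m:ℤ)+2) - k * ((m:ℤ)+3))
          + ((m:ℤ)+3) * ((m:ℤ)+1) * (((m:ℤ)+1) - ε)
          + (((e:ℤ)+3) * c - (((m:ℤ)+2)^3 - ((m:ℤ)+2)^2 + 1)) := by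
      linear_combination (-((m:ℤ)+3)) * h - P1 + (((m:ℤ)+2)) * P2 - P3 + P4
    have hge : (0:ℤ) ≤ ((m:ℤ)+2) * ((k - u - ε) * ((m:ℤ)+2+1)) - ((m:ℤ)+2) * B := by
      rw [hEq]; linarith [hK, w2, hMc]
    have := le_of_mul_le_mul_left (by linarith : ((m:ℤ)+2) * B ≤ ((m:ℤ)+2) * ((k - u - ε) * ((m:ℤ)+2+1))) (by positivity : (0:ℤ) < (m:ℤ)+2)
    linarith
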